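/- (Nonlocality of the W-state spatiotemporal correlations) Let γ₊ = (1 + 1/√2)/6 and γ₋ = (1 − 1/√2)/6, and define the conditional probability distribution T(a,b|x,y) for x, y ∈ {1, 2}, a ∈ {+, −, ∅}, b ∈ {+, −} by: T(a,b|x,y) = γ₋ if either (a = ∅ and b = −), or (a ∈ {+, −} and b = a and (x,y) ≠ (2,2)), or (a ∈ {+, −} and b ≠ a with b ∈ {+, −} and (x,y) = (2,2)); and T(a,b|x,y) = γ₊ in all other cases. Then T admits no local hidden variable model. -/
import Mathlib


/-!
**Statement 19 (nonlocality of the W-state spatiotemporal correlations).**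

Alice has 2 settings (indexed by `Fin 2`, with index `0` ↔ setting `1` and index `1` ↔
setting `2`) and 3 outcomes (indexed by `Fin 3`, with `0` ↔ `+`, `1` ↔ `−`, `2` ↔ `∅`);
Bob has 2 settings and 2 outcomes (`0` ↔ `+`, `1` ↔ `−`).  With `γ₊ = (1 + 1/√2)/6` and
`γ₋ = (1 − 1/√2)/6`, the correlation `T(a,b|x,y)` defined below admits no local hidden
variable model.
-/

/-- `P` (written `P a b x y` for `P(a,b|x,y)`) admits a local hidden variable model. -/
def HasLHVModel {ka kb oa ob : ℕ}
    (P : Fin oa → Fin ob → Fin ka → Fin kb → ℝ) : Prop :=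
  ∃ (Ω : Type) (_ : MeasurableSpace Ω) (μ : MeasureTheory.Measure Ω),
    MeasureTheory.IsProbabilityMeasure μ ∧
    ∃ (pA : Fin ka → Fin oa → Ω → ℝ) (pB : Fin kb → Fin ob → Ω → ℝ),
      (∀ x a, Measurable (pA x a)) ∧ (∀ y b, Measurable (pB y b)) ∧
      (∀ x a ω, 0 ≤ pA x a ω) ∧ (∀ y b ω, 0 ≤ pB y b ω) ∧
      (∀ x ω, (∑ a, pA x a ω) = 1) ∧ (∀ y ω, (∑ b, pB y b ω) = 1) ∧
      (∀ a b x y, P a b x y = ∫ ω, pA x a ω * pB y b ω ∂μ)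

/-- `γ₋ = (1 − 1/√2)/6`. -/
noncomputable def γm : ℝ := (1 - 1 / Real.sqrt 2) / 6

/-- `γ₊ = (1 + 1/√2)/6`. -/
noncomputable def γp : ℝ := (1 + 1 / Real.sqrt 2) / 6

/-- The W-state spatiotemporal correlation table: `T a b x y = γ₋` if either (`a = ∅` and
`b = −`), or (`a ∈ {+,−}`, `b = a` and `(x,y) ≠ (2,2)`), or (`a ∈ {+,−}`, `b ≠ a` and
`(x,y) = (2,2)`); and `T a b x y = γ₊` otherwise. -/
noncomputable def T (a : Fin 3) (b : Fin 2) (x y : Fin 2) : ℝ :=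
  if (a = 2 ∧ b = 1) ∨
     ((a = 0 ∧ b = 0 ∨ a = 1 ∧ b = 1) ∧ ¬(x = 1 ∧ y = 1)) ∨
     ((a = 0 ∧ b = 1 ∨ a = 1 ∧ b = 0) ∧ (x = 1 ∧ y = 1))
  then γm else γp

open MeasureTheory in
theorem w_state_spatiotemporal_correlations_nonlocal : ¬ HasLHVModel T := by
  rintro ⟨Ω, mΩ, μ, hμ, pA, pB, hmA, hmB, hAnn, hBnn, hAsum, hBsum, hT⟩
  set A : Fin 2 → Ω → ℝ := fun x ω => pA x 0 ω - pA x 1 ω - pA x 2 ω with hA_def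
  set B : Fin 2 → Ω → ℝ := fun y ω => pB y 0 ω - pB y 1 ω with hB_def
  have hAbd : ∀ x ω, -1 ≤ A x ω ∧ A x ω ≤ 1 := by
    intro x ω
    have hs := hAsum x ω
    rw [Fin.sum_univ_three] at hs
    have h0 := hAnn x 0 ω; have h1 := hAnn x 1 ω; have h2 := hAnn x 2 ω
    constructor <;> simp only [hA_def] <;> linarith
  have hBbd : ∀ y ω, -1 ≤ B y ω ∧ B y ω ≤ 1 := by
    intro y ω
    have hs := hBsum y ω
    rw [Fin.sum_univ_two] at hs
    have h0 := hBnn y 0 ω; have h1 := hBnn y 1 ω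
    constructor <;> simp only [hB_def] <;> linarith
  have hAle1 : ∀ (x : Fin 2) (a : Fin 3) ω, pA x a ω ≤ 1 := by
    intro x a ω
    have h := Finset.single_le_sum (f := fun i => pA x i ω)
      (fun i _ => hAnn x i ω) (Finset.mem_univ a)
    have hs := hAsum x ω
    linarith
  have hBle1 : ∀ (y : Fin 2) (b : Fin 2) ω, pB y b ω ≤ 1 := by
    intro y b ω
    have h := Finset.single_le_sum (f := fun i => pB y i ω)
      (fun i _ => hBnn y i ω) (Finset.mem_univ b)
    have hs := hBsum y ω
    linarith
  have hint : ∀ (x y : Fin 2) (a : Fin 3) (b : Fin 2),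
      Integrable (fun ω => pA x a ω * pB y b ω) μ := by
    intro x y a b
    refine ⟨((hmA x a).mul (hmB y b)).aestronglyMeasurable, ?_⟩
    apply MeasureTheory.HasFiniteIntegral.of_bounded (C := 1)
    filter_upwards with ω
    rw [Real.norm_eq_abs, abs_mul, abs_of_nonneg (hAnn x a ω), abs_of_nonneg (hBnn y b ω)]
    nlinarith [hAnn x a ω, hBnn y b ω, hAle1 x a ω, hBle1 y b ω]
  have hintAB : ∀ (x y : Fin 2), Integrable (fun ω => A x ω * B y ω) μ := by
    intro x y
    have he : (fun ω => A x ω * B y ω) = fun ω =>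
        pA x 0 ω * pB y 0 ω - pA x 0 ω * pB y 1 ω - pA x 1 ω * pB y 0 ω
          + pA x 1 ω * pB y 1 ω - pA x 2 ω * pB y 0 ω + pA x 2 ω * pB y 1 ω := by
      funext ω; simp only [hA_def, hB_def]; ring
    rw [he]
    exact (((((hint x y 0 0).sub (hint x y 0 1)).sub (hint x y 1 0)).add
      (hint x y 1 1)).sub (hint x y 2 0)).add (hint x y 2 1)
  have hE : ∀ x y : Fin 2,
      ∫ ω, A x ω * B y ω ∂μ =
        T 0 0 x y - T 0 1 x y - T 1 0 x y + T 1 1 x y - T 2 0 x y + T 2 1 x y := by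
    intro x y
    have he : (fun ω => A x ω * B y ω) = fun ω =>
        pA x 0 ω * pB y 0 ω - pA x 0 ω * pB y 1 ω - pA x 1 ω * pB y 0 ω
          + pA x 1 ω * pB y 1 ω - pA x 2 ω * pB y 0 ω + pA x 2 ω * pB y 1 ω := by
      funext ω; simp only [hA_def, hB_def]; ring
    rw [he, integral_add, integral_sub, integral_add, integral_sub, integral_sub,
      hT 0 0 x y, hT 0 1 x y, hT 1 0 x y, hT 1 1 x y, hT 2 0 x y, hT 2 1 x y]
    · exact hint x y 0 0
    · exact hint x y 0 1
    · exact (hint x y 0 0).sub (hint x y 0 1)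
    · exact hint x y 1 0
    · exact ((hint x y 0 0).sub (hint x y 0 1)).sub (hint x y 1 0)
    · exact hint x y 1 1
    · exact (((hint x y 0 0).sub (hint x y 0 1)).sub (hint x y 1 0)).add (hint x y 1 1)
    · exact hint x y 2 0
    · exact ((((hint x y 0 0).sub (hint x y 0 1)).sub (hint x y 1 0)).add
        (hint x y 1 1)).sub (hint x y 2 0)
    · exact hint x y 2 1
  -- CHSH bound
  have hIcomb : Integrable
      (fun ω => A 0 ω * B 0 ω + A 0 ω * B 1 ω + A 1 ω * B 0 ω - A 1 ω * B 1 ω) μ :=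
    (((hintAB 0 0).add (hintAB 0 1)).add (hintAB 1 0)).sub (hintAB 1 1)
  have hptwise : ∀ ω, (-2 : ℝ) ≤
      A 0 ω * B 0 ω + A 0 ω * B 1 ω + A 1 ω * B 0 ω - A 1 ω * B 1 ω := by
    intro ω
    obtain ⟨ha0l, ha0u⟩ := hAbd 0 ω
    obtain ⟨ha1l, ha1u⟩ := hAbd 1 ω
    obtain ⟨hb0l, hb0u⟩ := hBbd 0 ω
    obtain ⟨hb1l, hb1u⟩ := hBbd 1 ω
    nlinarith [mul_nonneg (by linarith : (0:ℝ) ≤ 1 + A 0 ω) (by linarith : (0:ℝ) ≤ 1 + B 0 ω),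
      mul_nonneg (by linarith : (0:ℝ) ≤ 1 - A 0 ω) (by linarith : (0:ℝ) ≤ 1 - B 1 ω),
      mul_nonneg (by linarith : (0:ℝ) ≤ 1 + A 1 ω) (by linarith : (0:ℝ) ≤ 1 + B 1 ω),
      mul_nonneg (by linarith : (0:ℝ) ≤ 1 - A 1 ω) (by linarith : (0:ℝ) ≤ 1 - B 0 ω),
      mul_nonneg (by linarith : (0:ℝ) ≤ 1 + A 0 ω) (by linarith : (0:ℝ) ≤ 1 + B 1 ω),
      mul_nonneg (by linarith : (0:ℝ) ≤ 1 - A 0 ω) (by linarith : (0:ℝ) ≤ 1 - B 0 ω)]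
  have hlow : (-2 : ℝ) ≤
      ∫ ω, (A 0 ω * B 0 ω + A 0 ω * B 1 ω + A 1 ω * B 0 ω - A 1 ω * B 1 ω) ∂μ := by
    have h := integral_mono (μ := μ) (f := fun _ => (-2 : ℝ))
      (g := fun ω => A 0 ω * B 0 ω + A 0 ω * B 1 ω + A 1 ω * B 0 ω - A 1 ω * B 1 ω)
      (integrable_const _) hIcomb (fun ω => hptwise ω)
    simpa using h
  have hsplit :
      ∫ ω, (A 0 ω * B 0 ω + A 0 ω * B 1 ω + A 1 ω * B 0 ω - A 1 ω * B 1 ω) ∂μ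
        = (∫ ω, A 0 ω * B 0 ω ∂μ) + (∫ ω, A 0 ω * B 1 ω ∂μ)
          + (∫ ω, A 1 ω * B 0 ω ∂μ) - ∫ ω, A 1 ω * B 1 ω ∂μ := by
    have e1 : ∫ ω, (A 0 ω * B 0 ω + A 0 ω * B 1 ω) ∂μ
        = (∫ ω, A 0 ω * B 0 ω ∂μ) + ∫ ω, A 0 ω * B 1 ω ∂μ :=
      integral_add (hintAB 0 0) (hintAB 0 1)
    have e2 : ∫ ω, (A 0 ω * B 0 ω + A 0 ω * B 1 ω + A 1 ω * B 0 ω) ∂μ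
        = (∫ ω, (A 0 ω * B 0 ω + A 0 ω * B 1 ω) ∂μ) + ∫ ω, A 1 ω * B 0 ω ∂μ :=
      integral_add ((hintAB 0 0).add (hintAB 0 1)) (hintAB 1 0)
    have e3 : ∫ ω, (A 0 ω * B 0 ω + A 0 ω * B 1 ω + A 1 ω * B 0 ω - A 1 ω * B 1 ω) ∂μ
        = (∫ ω, (A 0 ω * B 0 ω + A 0 ω * B 1 ω + A 1 ω * B 0 ω) ∂μ) - ∫ ω, A 1 ω * B 1 ω ∂μ :=
      integral_sub (((hintAB 0 0).add (hintAB 0 1)).add (hintAB 1 0)) (hintAB 1 1)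
    rw [e3, e2, e1]
  rw [hsplit, hE 0 0, hE 0 1, hE 1 0, hE 1 1] at hlow
  have hval : (-2 : ℝ) ≤ 10 * γm - 10 * γp := by
    norm_num [T, Fin.ext_iff] at hlow
    linarith
  have hs2 : (0:ℝ) < Real.sqrt 2 := Real.sqrt_pos.mpr (by norm_num)
  have hs2sq : Real.sqrt 2 ^ 2 = 2 := Real.sq_sqrt (by norm_num)
  rw [γm, γp] at hval
  have h1 : 1 / Real.sqrt 2 = Real.sqrt 2 / 2 := by
    rw [div_eq_div_iff hs2.ne' (by norm_num : (2:ℝ) ≠ 0)]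
    nlinarith
  rw [h1] at hval
  nlinarith
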